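/- Let $A$ be a connected union of triangles (a triangle collection) on $v\ge 5$ vertices with minimum degree $\delta(A)\ge 3$ and $e(A) = 2v-2$ edges, containing a spanning $(v-2)$-bunch $B$ of triangles with $e(B)=2v-3$. Then $A$ is the wheel $W_{v-1}$ (a cycle on $v-1$ vertices plus a hub adjacent to all of them). -/

import Mathlib

open scoped Classical

/-- The union graph of a family of cliques. -/
def cliquesGraph {α : Type*} {s : ℕ} (F : Fin s → Finset α) : SimpleGraph α where
  Adj u v := u ≠ v ∧ ∃ i, u ∈ F i ∧ v ∈ F i
  symm := by
    refine ⟨?_⟩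
    rintro u v ⟨h, i, h1, h2⟩
    exact ⟨h.symm, i, h2, h1⟩
  loopless := by
    refine ⟨?_⟩
    rintro u ⟨h, -⟩
    exact h rfl

/-- `F` is an `s`-bunch of `k`-cliques. -/
def IsBunch {α : Type*} [DecidableEq α] (k : ℕ) {s : ℕ} (F : Fin s → Finset α) : Prop :=
  (∀ i, (F i).card = k) ∧
  ∀ i : Fin s, 0 < (i : ℕ) →
    ¬ F i ⊆ (Finset.Iio i).biUnion F ∧ 2 ≤ (F i ∩ (Finset.Iio i).biUnion F).card

/-- The auxiliary graph of a family of cliques: two (indices of) cliques are adjacent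
iff they are distinct and share at least two vertices. -/
def auxGraph {α : Type*} [DecidableEq α] {m : ℕ} (G : Fin m → Finset α) :
    SimpleGraph (Fin m) where
  Adj i j := i ≠ j ∧ 2 ≤ (G i ∩ G j).card
  symm := by
    refine ⟨?_⟩
    rintro i j ⟨h1, h2⟩
    exact ⟨h1.symm, by rwa [Finset.inter_comm]⟩
  loopless := by
    refine ⟨?_⟩
    rintro i ⟨h, -⟩
    exact h rfl

/-- The wheel graph `W_n`: a cycle on the `n` vertices `some i` together with a hub
`none` adjacent to all cycle vertices. -/
def wheel (n : ℕ) : SimpleGraph (Option (Fin n)) where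
  Adj u v := u ≠ v ∧ (u = none ∨ v = none ∨
    ∃ i j : Fin n, u = some i ∧ v = some j ∧
      ((i.val + 1) % n = j.val ∨ (j.val + 1) % n = i.val))
  symm := by
    refine ⟨?_⟩
    rintro u v ⟨h1, h2⟩
    refine ⟨h1.symm, ?_⟩
    rcases h2 with h | h | ⟨i, j, hi, hj, h⟩
    · exact Or.inr (Or.inl h)
    · exact Or.inl h
    · exact Or.inr (Or.inr ⟨j, i, hj, hi, h.symm⟩)
  loopless := by
    refine ⟨?_⟩
    rintro u ⟨h, -⟩
    exact h rfl


set_option linter.unusedSectionVars false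
namespace BunchAux
variable {V : Type} [Fintype V] [DecidableEq V] {n : ℕ}

/-- The union graph of the first `k` cliques. -/
def partGraph (F : Fin n → Finset V) (k : ℕ) : SimpleGraph V where
  Adj u v := u ≠ v ∧ ∃ i : Fin n, i.val < k ∧ u ∈ F i ∧ v ∈ F i
  symm := by refine ⟨?_⟩; rintro u v ⟨h, i, hi, h1, h2⟩; exact ⟨h.symm, i, hi, h2, h1⟩
  loopless := by refine ⟨?_⟩; rintro u ⟨h, -⟩; exact h rfl

/-- Vertices covered by the first `k` cliques. -/
def partU (F : Fin n → Finset V) (k : ℕ) : Finset V :=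
  (Finset.univ.filter (fun i : Fin n => i.val < k)).biUnion F

lemma mem_partU {F : Fin n → Finset V} {k : ℕ} {w : V} :
    w ∈ partU F k ↔ ∃ i : Fin n, i.val < k ∧ w ∈ F i := by
  simp [partU]

lemma partGraph_adj {F : Fin n → Finset V} {k : ℕ} {u v : V} :
    (partGraph F k).Adj u v ↔ u ≠ v ∧ ∃ i : Fin n, i.val < k ∧ u ∈ F i ∧ v ∈ F i :=
  Iff.rfl

lemma partGraph_mono {F : Fin n → Finset V} {k k' : ℕ} (h : k ≤ k') :
    partGraph F k ≤ partGraph F k' := by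
  rintro u v ⟨hne, i, hi, h1, h2⟩
  exact ⟨hne, i, lt_of_lt_of_le hi h, h1, h2⟩

lemma mem_nbr {F : Fin n → Finset V} {k : ℕ} {w u : V} :
    u ∈ (partGraph F k).neighborFinset w ↔ (partGraph F k).Adj w u := by
  simp [SimpleGraph.mem_neighborFinset]

lemma nbr_subset_partU {F : Fin n → Finset V} {k : ℕ} {w : V} :
    (partGraph F k).neighborFinset w ⊆ partU F k := by
  intro u hu
  rw [mem_nbr] at hu
  obtain ⟨-, i, hi, -, h2⟩ := hu
  exact mem_partU.2 ⟨i, hi, h2⟩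

lemma nbr_empty_of_not_mem {F : Fin n → Finset V} {k : ℕ} {w : V} (hw : w ∉ partU F k) :
    (partGraph F k).neighborFinset w = ∅ := by
  rw [Finset.eq_empty_iff_forall_notMem]
  intro u hu
  rw [mem_nbr] at hu
  obtain ⟨-, i, hi, h1, -⟩ := hu
  exact hw (mem_partU.2 ⟨i, hi, h1⟩)

lemma two_le_degree {F : Fin n → Finset V} {k : ℕ} (h3 : ∀ i, (F i).card = 3) {w : V}
    (hw : w ∈ partU F k) : 2 ≤ (partGraph F k).degree w := by
  obtain ⟨i, hi, hwF⟩ := mem_partU.1 hw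
  have hsub : (F i).erase w ⊆ (partGraph F k).neighborFinset w := by
    intro u hu
    rw [Finset.mem_erase] at hu
    exact mem_nbr.2 ⟨Ne.symm hu.1, i, hi, hwF, hu.2⟩
  have := Finset.card_le_card hsub
  rw [Finset.card_erase_of_mem hwF, h3 i] at this
  exact le_trans (by norm_num) this

lemma Iio_biUnion_eq {F : Fin n → Finset V} (i : Fin n) :
    (Finset.Iio i).biUnion F = partU F i.val := by
  have : Finset.Iio i = Finset.univ.filter (fun j : Fin n => j.val < i.val) := by
    ext j
    simp only [Finset.mem_Iio, Finset.mem_filter, Finset.mem_univ, true_and, Fin.lt_def]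
  rw [partU, this]

/-- Step data: for `1 ≤ k < n`, the `k`-th clique consists of two old vertices
(forming the glue) and one new vertex. -/
lemma step_data {F : Fin n → Finset V} (hB : IsBunch 3 F) {k : ℕ} (hk1 : 0 < k)
    (hkn : k < n) :
    ∃ a b x : V, a ≠ b ∧ a ≠ x ∧ b ≠ x ∧ a ∈ partU F k ∧ b ∈ partU F k ∧
      x ∉ partU F k ∧ F ⟨k, hkn⟩ = {a, b, x} := by
  obtain ⟨hnsub, hcard⟩ := hB.2 ⟨k, hkn⟩ hk1
  rw [Iio_biUnion_eq] at hnsub hcard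
  set i : Fin n := ⟨k, hkn⟩
  change 2 ≤ (F i ∩ partU F k).card at hcard
  obtain ⟨x, hxF, hxU⟩ := Finset.not_subset.1 hnsub
  change x ∉ partU F k at hxU
  have hglue : F i ∩ partU F k ⊆ (F i).erase x := by
    intro u hu
    rw [Finset.mem_inter] at hu
    rw [Finset.mem_erase]
    exact ⟨fun h => hxU (h ▸ hu.2), hu.1⟩
  have hge : 2 ≤ ((F i).erase x).card := le_trans hcard (Finset.card_le_card hglue)
  have hle : ((F i).erase x).card = 2 := by
    have := Finset.card_erase_of_mem hxF
    rw [hB.1 i] at this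
    omega
  obtain ⟨a, b, hab, habeq⟩ := Finset.card_eq_two.1 hle
  have haU : a ∈ partU F k := by
    by_contra haU
    have h2 : (F i ∩ partU F k).card ≤ 1 := by
      have : F i ∩ partU F k ⊆ {b} := by
        intro u hu
        have hu' := hglue hu
        rw [habeq] at hu'
        rcases Finset.mem_insert.1 hu' with h | h
        · exact absurd ((Finset.mem_inter.1 hu).2) (h ▸ haU)
        · exact h
      exact le_trans (Finset.card_le_card this) (by simp)
    omega
  have hbU : b ∈ partU F k := by
    by_contra hbU
    have h2 : (F i ∩ partU F k).card ≤ 1 := by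
      have : F i ∩ partU F k ⊆ {a} := by
        intro u hu
        have hu' := hglue hu
        rw [habeq] at hu'
        rcases Finset.mem_insert.1 hu' with h | h
        · exact h ▸ Finset.mem_singleton_self a
        · exact absurd ((Finset.mem_inter.1 hu).2) ((Finset.mem_singleton.1 h) ▸ hbU)
      exact le_trans (Finset.card_le_card this) (by simp)
    omega
  have haF : a ∈ F i := (Finset.mem_erase.1 (habeq ▸ Finset.mem_insert_self a {b})).2
  have hbF : b ∈ F i := by
    have : b ∈ (F i).erase x := habeq ▸ (by simp)
    exact (Finset.mem_erase.1 this).2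
  have hax : a ≠ x := fun h => hxU (h ▸ haU)
  have hbx : b ≠ x := fun h => hxU (h ▸ hbU)
  refine ⟨a, b, x, hab, hax, hbx, haU, hbU, hxU, ?_⟩
  have hsub : ({a, b, x} : Finset V) ⊆ F i := by
    intro u hu
    rcases Finset.mem_insert.1 hu with rfl | hu
    · exact haF
    rcases Finset.mem_insert.1 hu with rfl | hu
    · exact hbF
    · exact (Finset.mem_singleton.1 hu) ▸ hxF
  have hc3 : ({a, b, x} : Finset V).card = 3 := by
    rw [Finset.card_insert_of_notMem (by simp [hab, hax]),
      Finset.card_insert_of_notMem (by simp [hbx]), Finset.card_singleton]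
  exact (Finset.eq_of_subset_of_card_le hsub (by rw [hB.1 i, hc3])).symm

lemma adj_succ {F : Fin n → Finset V} {k : ℕ} (hkn : k < n) {w u : V} :
    (partGraph F (k+1)).Adj w u ↔
      (partGraph F k).Adj w u ∨ (w ≠ u ∧ w ∈ F ⟨k, hkn⟩ ∧ u ∈ F ⟨k, hkn⟩) := by
  constructor
  · rintro ⟨hne, i, hi, h1, h2⟩
    rcases Nat.lt_succ_iff_lt_or_eq.1 hi with h | h
    · exact Or.inl ⟨hne, i, h, h1, h2⟩
    · right
      have hik : i = ⟨k, hkn⟩ := Fin.ext h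
      exact ⟨hne, hik ▸ h1, hik ▸ h2⟩
  · rintro (⟨hne, i, hi, h1, h2⟩ | ⟨hne, h1, h2⟩)
    · exact ⟨hne, i, Nat.lt_succ_of_lt hi, h1, h2⟩
    · exact ⟨hne, ⟨k, hkn⟩, Nat.lt_succ_self k, h1, h2⟩

section Step

variable {F : Fin n → Finset V} {k : ℕ} {a b x : V}

lemma nbr_new (hkn : k < n) (hF : F ⟨k, hkn⟩ = {a, b, x}) (hax : a ≠ x) (hbx : b ≠ x)
    (hxU : x ∉ partU F k) :
    (partGraph F (k+1)).neighborFinset x = {a, b} := by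
  ext u
  rw [mem_nbr, adj_succ hkn]
  constructor
  · rintro (h | ⟨hne, h1, h2⟩)
    · exact absurd (nbr_subset_partU (mem_nbr.2 h.symm) : x ∈ partU F k) hxU
    · rw [hF] at h2
      rcases Finset.mem_insert.1 h2 with rfl | h2
      · simp
      rcases Finset.mem_insert.1 h2 with rfl | h2
      · simp
      · exact absurd (Finset.mem_singleton.1 h2).symm hne
  · intro hu
    right
    rcases Finset.mem_insert.1 hu with rfl | hu
    · exact ⟨hax.symm, by rw [hF]; simp, by rw [hF]; simp⟩
    · rw [Finset.mem_singleton] at hu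
      subst hu
      exact ⟨hbx.symm, by rw [hF]; simp, by rw [hF]; simp⟩

lemma nbr_untouched (hkn : k < n) {w : V} (hw : w ∉ F ⟨k, hkn⟩) :
    (partGraph F (k+1)).neighborFinset w = (partGraph F k).neighborFinset w := by
  ext u
  rw [mem_nbr, mem_nbr, adj_succ hkn]
  constructor
  · rintro (h | ⟨-, h1, -⟩)
    · exact h
    · exact absurd h1 hw
  · exact Or.inl

lemma nbr_glue_a (hkn : k < n) (hF : F ⟨k, hkn⟩ = {a, b, x}) (hax : a ≠ x)
    (hadj : (partGraph F k).Adj a b) :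
    (partGraph F (k+1)).neighborFinset a = insert x ((partGraph F k).neighborFinset a) := by
  ext u
  rw [mem_nbr, Finset.mem_insert, mem_nbr, adj_succ hkn]
  constructor
  · rintro (h | ⟨hne, h1, h2⟩)
    · exact Or.inr h
    · rw [hF] at h2
      rcases Finset.mem_insert.1 h2 with rfl | h2
      · exact absurd rfl hne
      rcases Finset.mem_insert.1 h2 with rfl | h2
      · exact Or.inr hadj
      · exact Or.inl (Finset.mem_singleton.1 h2)
  · rintro (rfl | h)
    · exact Or.inr ⟨hax, by rw [hF]; simp, by rw [hF]; simp⟩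
    · exact Or.inl h

lemma deg_new (hkn : k < n) (hF : F ⟨k, hkn⟩ = {a, b, x}) (hab : a ≠ b) (hax : a ≠ x)
    (hbx : b ≠ x) (hxU : x ∉ partU F k) :
    (partGraph F (k+1)).degree x = 2 := by
  rw [SimpleGraph.degree, nbr_new hkn hF hax hbx hxU]
  rw [Finset.card_insert_of_notMem (by simp [hab]), Finset.card_singleton]

lemma deg_glue_a (hkn : k < n) (hF : F ⟨k, hkn⟩ = {a, b, x}) (hax : a ≠ x)
    (hxU : x ∉ partU F k) (hadj : (partGraph F k).Adj a b) :
    (partGraph F (k+1)).degree a = (partGraph F k).degree a + 1 := by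
  rw [SimpleGraph.degree, SimpleGraph.degree, nbr_glue_a hkn hF hax hadj,
    Finset.card_insert_of_notMem (fun h => hxU (nbr_subset_partU h))]

lemma deg_untouched (hkn : k < n) {w : V} (hw : w ∉ F ⟨k, hkn⟩) :
    (partGraph F (k+1)).degree w = (partGraph F k).degree w := by
  rw [SimpleGraph.degree, SimpleGraph.degree, nbr_untouched hkn hw]

lemma edge_step_two (hkn : k < n) (hF : F ⟨k, hkn⟩ = {a, b, x}) (hab : a ≠ b) (hax : a ≠ x)
    (hbx : b ≠ x) (hxU : x ∉ partU F k) :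
    (partGraph F k).edgeFinset.card + 2 ≤ (partGraph F (k+1)).edgeFinset.card := by
  have hmono : (partGraph F k).edgeFinset ⊆ (partGraph F (k+1)).edgeFinset :=
    SimpleGraph.edgeFinset_mono (partGraph_mono (Nat.le_succ k))
  have haxE : s(a, x) ∈ (partGraph F (k+1)).edgeFinset := by
    rw [SimpleGraph.mem_edgeFinset, SimpleGraph.mem_edgeSet]
    exact ⟨hax, ⟨k, hkn⟩, Nat.lt_succ_self k, by rw [hF]; simp, by rw [hF]; simp⟩
  have hbxE : s(b, x) ∈ (partGraph F (k+1)).edgeFinset := by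
    rw [SimpleGraph.mem_edgeFinset, SimpleGraph.mem_edgeSet]
    exact ⟨hbx, ⟨k, hkn⟩, Nat.lt_succ_self k, by rw [hF]; simp, by rw [hF]; simp⟩
  have hxnotE : ∀ u : V, s(u, x) ∉ (partGraph F k).edgeFinset := by
    intro u h
    rw [SimpleGraph.mem_edgeFinset, SimpleGraph.mem_edgeSet] at h
    exact hxU (nbr_subset_partU (mem_nbr.2 h))
  have hsub : insert s(a, x) (insert s(b, x) (partGraph F k).edgeFinset) ⊆
      (partGraph F (k+1)).edgeFinset := by
    intro e he
    rcases Finset.mem_insert.1 he with rfl | he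
    · exact haxE
    rcases Finset.mem_insert.1 he with rfl | he
    · exact hbxE
    · exact hmono he
  have hcard := Finset.card_le_card hsub
  rw [Finset.card_insert_of_notMem, Finset.card_insert_of_notMem (hxnotE b)] at hcard
  · omega
  · intro h
    rcases Finset.mem_insert.1 h with h | h
    · rw [Sym2.eq_iff] at h
      tauto
    · exact hxnotE a h

lemma edge_step_three (hkn : k < n) (hF : F ⟨k, hkn⟩ = {a, b, x}) (hab : a ≠ b) (hax : a ≠ x)
    (hbx : b ≠ x) (hxU : x ∉ partU F k) (hnadj : ¬ (partGraph F k).Adj a b) :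
    (partGraph F k).edgeFinset.card + 3 ≤ (partGraph F (k+1)).edgeFinset.card := by
  have hmono : (partGraph F k).edgeFinset ⊆ (partGraph F (k+1)).edgeFinset :=
    SimpleGraph.edgeFinset_mono (partGraph_mono (Nat.le_succ k))
  have haxE : s(a, x) ∈ (partGraph F (k+1)).edgeFinset := by
    rw [SimpleGraph.mem_edgeFinset, SimpleGraph.mem_edgeSet]
    exact ⟨hax, ⟨k, hkn⟩, Nat.lt_succ_self k, by rw [hF]; simp, by rw [hF]; simp⟩
  have hbxE : s(b, x) ∈ (partGraph F (k+1)).edgeFinset := by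
    rw [SimpleGraph.mem_edgeFinset, SimpleGraph.mem_edgeSet]
    exact ⟨hbx, ⟨k, hkn⟩, Nat.lt_succ_self k, by rw [hF]; simp, by rw [hF]; simp⟩
  have habE : s(a, b) ∈ (partGraph F (k+1)).edgeFinset := by
    rw [SimpleGraph.mem_edgeFinset, SimpleGraph.mem_edgeSet]
    exact ⟨hab, ⟨k, hkn⟩, Nat.lt_succ_self k, by rw [hF]; simp, by rw [hF]; simp⟩
  have hxnotE : ∀ u : V, s(u, x) ∉ (partGraph F k).edgeFinset := by
    intro u h
    rw [SimpleGraph.mem_edgeFinset, SimpleGraph.mem_edgeSet] at h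
    exact hxU (nbr_subset_partU (mem_nbr.2 h))
  have habnotE : s(a, b) ∉ (partGraph F k).edgeFinset := by
    rw [SimpleGraph.mem_edgeFinset, SimpleGraph.mem_edgeSet]
    exact hnadj
  have hsub : insert s(a, b) (insert s(a, x) (insert s(b, x) (partGraph F k).edgeFinset)) ⊆
      (partGraph F (k+1)).edgeFinset := by
    intro e he
    rcases Finset.mem_insert.1 he with rfl | he
    · exact habE
    rcases Finset.mem_insert.1 he with rfl | he
    · exact haxE
    rcases Finset.mem_insert.1 he with rfl | he
    · exact hbxE
    · exact hmono he
  have hcard := Finset.card_le_card hsub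
  rw [Finset.card_insert_of_notMem, Finset.card_insert_of_notMem,
    Finset.card_insert_of_notMem (hxnotE b)] at hcard
  · omega
  · intro h
    rcases Finset.mem_insert.1 h with h | h
    · rw [Sym2.eq_iff] at h
      tauto
    · exact hxnotE a h
  · intro h
    rcases Finset.mem_insert.1 h with h | h
    · rw [Sym2.eq_iff] at h
      tauto
    rcases Finset.mem_insert.1 h with h | h
    · rw [Sym2.eq_iff] at h
      tauto
    · exact habnotE h

end Step

lemma edge_one_lower {F : Fin n → Finset V} (h0 : 0 < n) (h3 : (F ⟨0, h0⟩).card = 3) :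
    3 ≤ (partGraph F 1).edgeFinset.card := by
  obtain ⟨a, b, c, hab, hac, hbc, hF⟩ := Finset.card_eq_three.1 h3
  have hmem : ∀ u v : V, u ≠ v → u ∈ F ⟨0, h0⟩ → v ∈ F ⟨0, h0⟩ →
      s(u, v) ∈ (partGraph F 1).edgeFinset := by
    intro u v huv hu hv
    rw [SimpleGraph.mem_edgeFinset, SimpleGraph.mem_edgeSet]
    exact ⟨huv, ⟨0, h0⟩, Nat.zero_lt_one, hu, hv⟩
  have hsub : ({s(a, b), s(a, c), s(b, c)} : Finset (Sym2 V)) ⊆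
      (partGraph F 1).edgeFinset := by
    intro e he
    rcases Finset.mem_insert.1 he with rfl | he
    · exact hmem a b hab (by rw [hF]; simp) (by rw [hF]; simp)
    rcases Finset.mem_insert.1 he with rfl | he
    · exact hmem a c hac (by rw [hF]; simp) (by rw [hF]; simp)
    · rw [Finset.mem_singleton] at he
      subst he
      exact hmem b c hbc (by rw [hF]; simp) (by rw [hF]; simp)
  refine le_trans (le_of_eq ?_) (Finset.card_le_card hsub)
  rw [Finset.card_insert_of_notMem (by simp [Sym2.eq_iff]; tauto),
    Finset.card_insert_of_notMem (by simp [Sym2.eq_iff]; tauto), Finset.card_singleton]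

lemma edge_lower {F : Fin n → Finset V} (hB : IsBunch 3 F) {j : ℕ} (h1 : 1 ≤ j)
    (hjn : j ≤ n) : 2 * j + 1 ≤ (partGraph F j).edgeFinset.card := by
  induction j, h1 using Nat.le_induction with
  | base => exact edge_one_lower (lt_of_lt_of_le Nat.zero_lt_one hjn) (hB.1 _)
  | succ j h1 ih =>
    have hjn' : j < n := lt_of_lt_of_le (Nat.lt_succ_self j) hjn
    obtain ⟨a, b, x, hab, hax, hbx, -, -, hxU, hF⟩ := step_data hB h1 hjn'
    have hstep := edge_step_two hjn' hF hab hax hbx hxU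
    have := ih (le_of_lt hjn')
    omega

lemma edge_chain {F : Fin n → Finset V} (hB : IsBunch 3 F) {k j : ℕ} (h1 : 1 ≤ k)
    (hkj : k ≤ j) (hjn : j ≤ n) :
    (partGraph F k).edgeFinset.card + 2 * (j - k) ≤ (partGraph F j).edgeFinset.card := by
  induction j, hkj using Nat.le_induction with
  | base => simp
  | succ j hkj ih =>
    have hjn' : j < n := lt_of_lt_of_le (Nat.lt_succ_self j) hjn
    obtain ⟨a, b, x, hab, hax, hbx, -, -, hxU, hF⟩ :=
      step_data hB (lt_of_lt_of_le h1 hkj) hjn'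
    have hstep := edge_step_two hjn' hF hab hax hbx hxU
    have := ih (le_of_lt hjn')
    omega

lemma glue_adj {F : Fin n → Finset V} (hB : IsBunch 3 F)
    (hEn : (partGraph F n).edgeFinset.card = 2 * n + 1) {k : ℕ} {a b x : V} (h1 : 1 ≤ k)
    (hkn : k < n) (hF : F ⟨k, hkn⟩ = {a, b, x}) (hab : a ≠ b) (hax : a ≠ x) (hbx : b ≠ x)
    (hxU : x ∉ partU F k) : (partGraph F k).Adj a b := by
  by_contra hnadj
  have h3 := edge_step_three hkn hF hab hax hbx hxU hnadj
  have hlow := edge_lower hB h1 (le_of_lt hkn)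
  have hchain := edge_chain (k := k+1) (j := n) hB (Nat.succ_le_succ (Nat.zero_le k)) hkn le_rfl
  omega

lemma deg_mono {F : Fin n → Finset V} {k k' : ℕ} (h : k ≤ k') (w : V) :
    (partGraph F k).degree w ≤ (partGraph F k').degree w := by
  apply Finset.card_le_card
  intro u hu
  exact mem_nbr.2 (partGraph_mono h (mem_nbr.1 hu))

lemma partU_one {F : Fin n → Finset V} (h0 : 0 < n) : partU F 1 = F ⟨0, h0⟩ := by
  ext w
  rw [mem_partU]
  constructor
  · rintro ⟨i, hi, hw⟩
    have : i = ⟨0, h0⟩ := Fin.ext (Nat.lt_one_iff.1 hi)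
    exact this ▸ hw
  · intro hw
    exact ⟨⟨0, h0⟩, Nat.zero_lt_one, hw⟩

lemma nbr_one {F : Fin n → Finset V} (h0 : 0 < n) {w : V} (hw : w ∈ F ⟨0, h0⟩) :
    (partGraph F 1).neighborFinset w = (F ⟨0, h0⟩).erase w := by
  ext u
  rw [mem_nbr, Finset.mem_erase]
  constructor
  · rintro ⟨hne, i, hi, h1, h2⟩
    have hieq : i = ⟨0, h0⟩ := Fin.ext (Nat.lt_one_iff.1 hi)
    exact ⟨fun h => hne (h ▸ rfl), hieq ▸ h2⟩
  · rintro ⟨hne, hu⟩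
    exact ⟨Ne.symm hne, ⟨0, h0⟩, Nat.zero_lt_one, hw, hu⟩

/-- The set of degree-2 vertices at stage `k`. -/
noncomputable def degTwo (F : Fin n → Finset V) (k : ℕ) : Finset V :=
  Finset.univ.filter (fun w => (partGraph F k).degree w = 2)

lemma mem_degTwo {F : Fin n → Finset V} {k : ℕ} {w : V} :
    w ∈ degTwo F k ↔ (partGraph F k).degree w = 2 := by
  simp [degTwo]

lemma degTwo_one {F : Fin n → Finset V} (h0 : 0 < n) (h3 : (F ⟨0, h0⟩).card = 3) :
    degTwo F 1 = F ⟨0, h0⟩ := by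
  ext w
  rw [mem_degTwo]
  constructor
  · intro hw
    by_contra hnw
    have : (partGraph F 1).neighborFinset w = ∅ :=
      nbr_empty_of_not_mem (by rwa [partU_one h0])
    rw [SimpleGraph.degree, this] at hw
    simp at hw
  · intro hw
    rw [SimpleGraph.degree, nbr_one h0 hw, Finset.card_erase_of_mem hw, h3]

lemma degTwo_subset_partU {F : Fin n → Finset V} {k : ℕ} :
    degTwo F k ⊆ partU F k := by
  intro w hw
  rw [mem_degTwo] at hw
  by_contra hnw
  rw [SimpleGraph.degree, nbr_empty_of_not_mem hnw] at hw
  simp at hw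

lemma degTwo_step {F : Fin n → Finset V} (h3 : ∀ i, (F i).card = 3) {k : ℕ} {a b x : V}
    (hkn : k < n) (hF : F ⟨k, hkn⟩ = {a, b, x}) (hab : a ≠ b) (hax : a ≠ x) (hbx : b ≠ x)
    (haU : a ∈ partU F k) (hbU : b ∈ partU F k) (hxU : x ∉ partU F k)
    (hadj : (partGraph F k).Adj a b) :
    degTwo F (k+1) = insert x (degTwo F k \ {a, b}) := by
  have hF' : F ⟨k, hkn⟩ = {b, a, x} := by rw [hF, Finset.insert_comm]
  ext w
  rw [mem_degTwo, Finset.mem_insert, Finset.mem_sdiff, mem_degTwo]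
  by_cases hwx : w = x
  · subst hwx
    exact ⟨fun _ => Or.inl rfl, fun _ => deg_new hkn hF hab hax hbx hxU⟩
  by_cases hwa : w = a
  · subst hwa
    rw [deg_glue_a hkn hF hax hxU hadj]
    have h2 := two_le_degree h3 haU
    constructor
    · intro h; omega
    · rintro (h | ⟨-, h⟩)
      · exact absurd h hwx
      · exact absurd (Finset.mem_insert_self w {b}) h
  by_cases hwb : w = b
  · subst hwb
    rw [deg_glue_a hkn hF' hbx hxU hadj.symm]
    have h2 := two_le_degree h3 hbU
    constructor
    · intro h; omega
    · rintro (h | ⟨-, h⟩)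
      · exact absurd h hwx
      · exact absurd (Finset.mem_insert_of_mem (Finset.mem_singleton_self w)) h
  · have hwF : w ∉ F ⟨k, hkn⟩ := by
      rw [hF]
      simp only [Finset.mem_insert, Finset.mem_singleton]
      tauto
    rw [deg_untouched hkn hwF]
    constructor
    · intro h
      refine Or.inr ⟨h, ?_⟩
      intro hmem
      rcases Finset.mem_insert.1 hmem with h' | h'
      · exact hwa h'
      · exact hwb (Finset.mem_singleton.1 h')
    · rintro (h | ⟨h, -⟩)
      · exact absurd h hwx
      · exact h

lemma no_adj_degTwo {F : Fin n → Finset V} (hB : IsBunch 3 F)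
    (hEn : (partGraph F n).edgeFinset.card = 2 * n + 1) {k : ℕ} (h2 : 2 ≤ k) (hkn : k ≤ n) :
    ∀ u w : V, (partGraph F k).Adj u w → (partGraph F k).degree u = 2 →
      (partGraph F k).degree w = 2 → False := by
  induction k, h2 using Nat.le_induction with
  | base =>
    have h0 : 0 < n := by omega
    have h1n : 1 < n := by omega
    obtain ⟨a, b, x, hab, hax, hbx, haU, hbU, hxU, hF⟩ := step_data hB Nat.zero_lt_one h1n
    rw [partU_one h0] at haU hbU hxU
    have hadj : (partGraph F 1).Adj a b := ⟨hab, ⟨0, h0⟩, Nat.zero_lt_one, haU, hbU⟩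
    have hdega : (partGraph F 2).degree a = (partGraph F 1).degree a + 1 :=
      deg_glue_a (k := 1) h1n hF hax (by rwa [partU_one h0]) hadj
    have hdegb : (partGraph F 2).degree b = (partGraph F 1).degree b + 1 := by
      have hF' : F ⟨1, h1n⟩ = {b, a, x} := by rw [hF, Finset.insert_comm]
      exact deg_glue_a (k := 1) h1n hF' hbx (by rwa [partU_one h0]) hadj.symm
    have h2a : 2 ≤ (partGraph F 1).degree a := two_le_degree hB.1 (by rwa [partU_one h0])
    have h2b : 2 ≤ (partGraph F 1).degree b := two_le_degree hB.1 (by rwa [partU_one h0])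
    rintro u w ⟨hne, i, hi, hu, hw⟩ hdu hdw
    have hi2 : i.val = 0 ∨ i.val = 1 := by omega
    have hmem : u ∈ F ⟨0, h0⟩ ∪ F ⟨1, h1n⟩ ∧ w ∈ F ⟨0, h0⟩ ∪ F ⟨1, h1n⟩ := by
      rcases hi2 with h | h
      · have : i = ⟨0, h0⟩ := Fin.ext h
        subst this
        exact ⟨Finset.mem_union_left _ hu, Finset.mem_union_left _ hw⟩
      · have : i = ⟨1, h1n⟩ := Fin.ext h
        subst this
        exact ⟨Finset.mem_union_right _ hu, Finset.mem_union_right _ hw⟩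
    -- u and w both have degree 2, so neither is a nor b
    have hua : u ≠ a := fun h => by rw [h, hdega] at hdu; omega
    have hub : u ≠ b := fun h => by rw [h, hdegb] at hdu; omega
    have hwa : w ≠ a := fun h => by rw [h, hdega] at hdw; omega
    have hwb : w ≠ b := fun h => by rw [h, hdegb] at hdw; omega
    -- so u, w ∈ {c, x} where c is the third vertex of F 0; but c and x are not adjacent
    -- in fact u ≠ w forces u, w to be distinct elements not equal to a, b in a 3-set
    rcases hi2 with h | h
    · have hieq : i = ⟨0, h0⟩ := Fin.ext h
      subst hieq
      -- F 0 has card 3, u w ∈ F 0, u,w ∉ {a,b}, a,b ∈ F 0, all distinct: 5 distinct elems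
      have : ({a, b, u, w} : Finset V).card ≤ 3 := by
        rw [← hB.1 ⟨0, h0⟩]
        apply Finset.card_le_card
        intro t ht
        simp only [Finset.mem_insert, Finset.mem_singleton] at ht
        rcases ht with rfl | rfl | rfl | rfl
        · exact haU
        · exact hbU
        · exact hu
        · exact hw
      have hc : ({a, b, u, w} : Finset V).card = 4 := by
        rw [Finset.card_insert_of_notMem (by simp [hab, hua.symm, hwa.symm]),
          Finset.card_insert_of_notMem (by simp [hub.symm, hwb.symm]),
          Finset.card_insert_of_notMem (by simp [hne]), Finset.card_singleton]
      omega
    · have hieq : i = ⟨1, h1n⟩ := Fin.ext h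
      subst hieq
      rw [hF] at hu hw
      simp only [Finset.mem_insert, Finset.mem_singleton] at hu hw
      rcases hu with rfl | rfl | rfl
      · exact hua rfl
      · exact hub rfl
      rcases hw with rfl | rfl | rfl
      · exact hwa rfl
      · exact hwb rfl
      · exact hne rfl
  | succ k h2 ih =>
    have hkn' : k < n := lt_of_lt_of_le (Nat.lt_succ_self k) hkn
    obtain ⟨a, b, x, hab, hax, hbx, haU, hbU, hxU, hF⟩ := step_data hB (by omega) hkn'
    have hadj : (partGraph F k).Adj a b := glue_adj hB hEn (by omega) hkn' hF hab hax hbx hxU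
    have hdega : (partGraph F (k+1)).degree a = (partGraph F k).degree a + 1 :=
      deg_glue_a hkn' hF hax hxU hadj
    have hdegb : (partGraph F (k+1)).degree b = (partGraph F k).degree b + 1 := by
      have hF' : F ⟨k, hkn'⟩ = {b, a, x} := by rw [hF, Finset.insert_comm]
      exact deg_glue_a hkn' hF' hbx hxU hadj.symm
    have h2a := two_le_degree hB.1 haU
    have h2b := two_le_degree hB.1 hbU
    rintro u w ⟨hne, i, hi, hu, hw⟩ hdu hdw
    have hua : u ≠ a := fun h => by rw [h, hdega] at hdu; omega
    have hub : u ≠ b := fun h => by rw [h, hdegb] at hdu; omega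
    have hwa : w ≠ a := fun h => by rw [h, hdega] at hdw; omega
    have hwb : w ≠ b := fun h => by rw [h, hdegb] at hdw; omega
    rcases Nat.lt_succ_iff_lt_or_eq.1 hi with h | h
    · -- old triangle: both u, w in partU F k with degree 2 already at stage k
      have huU : u ∈ partU F k := mem_partU.2 ⟨i, h, hu⟩
      have hwU : w ∈ partU F k := mem_partU.2 ⟨i, h, hw⟩
      have hdu' : (partGraph F k).degree u = 2 := by
        have := deg_mono (F := F) (k := k) (k' := k + 1) (Nat.le_add_right k 1) u
        have := two_le_degree hB.1 huU
        omega
      have hdw' : (partGraph F k).degree w = 2 := by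
        have := deg_mono (F := F) (k := k) (k' := k + 1) (Nat.le_add_right k 1) w
        have := two_le_degree hB.1 hwU
        omega
      exact ih (le_of_lt hkn') u w ⟨hne, i, h, hu, hw⟩ hdu' hdw'
    · have hieq : i = ⟨k, hkn'⟩ := Fin.ext h
      subst hieq
      rw [hF] at hu hw
      simp only [Finset.mem_insert, Finset.mem_singleton] at hu hw
      rcases hu with rfl | rfl | rfl
      · exact hua rfl
      · exact hub rfl
      rcases hw with rfl | rfl | rfl
      · exact hwa rfl
      · exact hwb rfl
      · exact hne rfl

lemma stage_two {F : Fin n → Finset V} (hB : IsBunch 3 F) (h0 : 0 < n) (h1 : 1 < n) :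
    ∃ a b c x : V, a ≠ b ∧ a ≠ c ∧ b ≠ c ∧ a ≠ x ∧ b ≠ x ∧ c ≠ x ∧
      F ⟨0, h0⟩ = {a, b, c} ∧ F ⟨1, h1⟩ = {a, b, x} ∧ x ∉ F ⟨0, h0⟩ ∧
      degTwo F 2 = {c, x} := by
  obtain ⟨a, b, x, hab, hax, hbx, haU, hbU, hxU, hF1⟩ := step_data hB Nat.zero_lt_one h1
  rw [partU_one h0] at haU hbU hxU
  have hsub : ({a, b} : Finset V) ⊆ F ⟨0, h0⟩ := by
    intro t ht
    rcases Finset.mem_insert.1 ht with rfl | ht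
    · exact haU
    · exact (Finset.mem_singleton.1 ht) ▸ hbU
  have hcab : ({a, b} : Finset V).card = 2 := by
    rw [Finset.card_insert_of_notMem (by simp [hab]), Finset.card_singleton]
  have hcd : (F ⟨0, h0⟩ \ {a, b}).card = 1 := by
    rw [Finset.card_sdiff_of_subset hsub, hB.1 _, hcab]
  obtain ⟨c, hc⟩ := Finset.card_eq_one.1 hcd
  have hcF : c ∈ F ⟨0, h0⟩ ∧ c ∉ ({a, b} : Finset V) := by
    have : c ∈ F ⟨0, h0⟩ \ {a, b} := hc ▸ Finset.mem_singleton_self c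
    exact Finset.mem_sdiff.1 this
  have hac : a ≠ c := fun h => hcF.2 (h ▸ Finset.mem_insert_self a {b})
  have hbc : b ≠ c := fun h =>
    hcF.2 (h ▸ Finset.mem_insert_of_mem (Finset.mem_singleton_self b))
  have hcx : c ≠ x := fun h => hxU (h ▸ hcF.1)
  have hF0 : F ⟨0, h0⟩ = {a, b, c} := by
    have hu : ({a, b} : Finset V) ∪ (F ⟨0, h0⟩ \ {a, b}) = F ⟨0, h0⟩ :=
      Finset.union_sdiff_of_subset hsub
    rw [hc] at hu
    rw [← hu]
    ext t
    simp only [Finset.mem_union, Finset.mem_insert, Finset.mem_singleton]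
    tauto
  have hadj : (partGraph F 1).Adj a b := ⟨hab, ⟨0, h0⟩, Nat.zero_lt_one, haU, hbU⟩
  have hstep := degTwo_step hB.1 (k := 1) h1 hF1 hab hax hbx
    (by rwa [partU_one h0]) (by rwa [partU_one h0]) (by rwa [partU_one h0]) hadj
  have hdt : degTwo F 2 = {c, x} := by
    rw [hstep, degTwo_one h0 (hB.1 _), hF0]
    have : ({a, b, c} : Finset V) \ {a, b} = {c} := by
      ext t
      simp only [Finset.mem_sdiff, Finset.mem_insert, Finset.mem_singleton]
      constructor
      · rintro ⟨rfl | rfl | rfl, h2⟩ <;> tauto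
      · rintro rfl
        exact ⟨by tauto, by push_neg; exact ⟨hac.symm, hbc.symm⟩⟩
    rw [this, Finset.pair_comm x c]
  exact ⟨a, b, c, x, hab, hac, hbc, hax, hbx, hcx, hF0, hF1, hxU, hdt⟩

lemma degTwo_card_two {F : Fin n → Finset V} (hB : IsBunch 3 F) (h0 : 0 < n) (h1 : 1 < n) :
    (degTwo F 2).card = 2 := by
  obtain ⟨a, b, c, x, hab, hac, hbc, hax, hbx, hcx, hF0, hF1, hxU, hdt⟩ :=
    stage_two hB h0 h1
  rw [hdt, Finset.card_insert_of_notMem (by simp [hcx]), Finset.card_singleton]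

lemma degTwo_step_card {F : Fin n → Finset V} (hB : IsBunch 3 F)
    (hEn : (partGraph F n).edgeFinset.card = 2 * n + 1) {k : ℕ} (h2 : 2 ≤ k) (hkn : k < n) :
    (degTwo F k).card ≤ (degTwo F (k+1)).card ∧
      (degTwo F (k+1)).card ≤ (degTwo F k).card + 1 := by
  obtain ⟨a, b, x, hab, hax, hbx, haU, hbU, hxU, hF⟩ := step_data hB (by omega) hkn
  have hadj : (partGraph F k).Adj a b := glue_adj hB hEn (by omega) hkn hF hab hax hbx hxU
  have hstep := degTwo_step hB.1 hkn hF hab hax hbx haU hbU hxU hadj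
  have hxS : x ∉ degTwo F k \ {a, b} :=
    fun h => hxU (degTwo_subset_partU (Finset.mem_sdiff.1 h).1)
  have hcardeq : (degTwo F (k+1)).card = (degTwo F k \ {a, b}).card + 1 := by
    rw [hstep, Finset.card_insert_of_notMem hxS]
  have hinter : (degTwo F k ∩ {a, b}).card ≤ 1 := by
    by_contra h
    push_neg at h
    have ha : a ∈ degTwo F k ∧ b ∈ degTwo F k := by
      constructor
      · by_contra ha
        have : degTwo F k ∩ {a, b} ⊆ {b} := by
          intro t ht
          rw [Finset.mem_inter] at ht
          rcases Finset.mem_insert.1 ht.2 with rfl | h'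
          · exact absurd ht.1 ha
          · exact h'
        have := Finset.card_le_card this
        simp at this
        omega
      · by_contra hb
        have : degTwo F k ∩ {a, b} ⊆ {a} := by
          intro t ht
          rw [Finset.mem_inter] at ht
          rcases Finset.mem_insert.1 ht.2 with rfl | h'
          · exact Finset.mem_singleton_self t
          · exact absurd ((Finset.mem_singleton.1 h') ▸ ht.1) hb
        have := Finset.card_le_card this
        simp at this
        omega
    exact no_adj_degTwo hB hEn h2 (le_of_lt hkn) a b hadj
      (mem_degTwo.1 ha.1) (mem_degTwo.1 ha.2)
  have hsdiff := Finset.card_inter_add_card_sdiff (degTwo F k) ({a, b} : Finset V)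
  omega

lemma degTwo_card_chain {F : Fin n → Finset V} (hB : IsBunch 3 F)
    (hEn : (partGraph F n).edgeFinset.card = 2 * n + 1) {k j : ℕ} (h2 : 2 ≤ k)
    (hkj : k ≤ j) (hjn : j ≤ n) :
    (degTwo F k).card ≤ (degTwo F j).card := by
  induction j, hkj using Nat.le_induction with
  | base => exact le_rfl
  | succ j hkj ih =>
    have hjn' : j < n := lt_of_lt_of_le (Nat.lt_succ_self j) hjn
    exact le_trans (ih (le_of_lt hjn'))
      (degTwo_step_card hB hEn (le_trans h2 hkj) hjn').1

lemma common_nbr_mem {F : Fin n → Finset V} (hB : IsBunch 3 F)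
    (hEn : (partGraph F n).edgeFinset.card = 2 * n + 1)
    (hcard : ∀ j, 2 ≤ j → j ≤ n → (degTwo F j).card = 2) {k : ℕ} (h2 : 2 ≤ k) :
    k ≤ n → ∀ w p q : V, p ∈ degTwo F k → q ∈ degTwo F k → p ≠ q →
      (partGraph F k).Adj w p → (partGraph F k).Adj w q →
      ∀ i : Fin n, i.val < k → w ∈ F i := by
  induction k, h2 using Nat.le_induction with
  | base =>
    intro hkn w p q hp hq hpq hwp hwq i hi
    have h0 : 0 < n := by omega
    have h1 : 1 < n := by omega
    obtain ⟨a, b, c, x, hab, hac, hbc, hax, hbx, hcx, hF0, hF1, hxU0, hdt⟩ :=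
      stage_two hB h0 h1
    have hwx : (partGraph F 2).Adj w x := by
      rw [hdt] at hp hq
      rcases Finset.mem_insert.1 hp with rfl | hp'
      · rcases Finset.mem_insert.1 hq with rfl | hq'
        · exact absurd rfl hpq
        · exact (Finset.mem_singleton.1 hq') ▸ hwq
      · exact (Finset.mem_singleton.1 hp') ▸ hwp
    have hxU1 : x ∉ partU F 1 := by rwa [partU_one h0]
    have hwab : w ∈ ({a, b} : Finset V) := by
      have hm := mem_nbr.2 hwx.symm
      rwa [nbr_new (k := 1) h1 hF1 hax hbx hxU1] at hm
    have hival : i.val = 0 ∨ i.val = 1 := by omega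
    rcases hival with h | h
    · have hie : i = ⟨0, h0⟩ := Fin.ext h
      subst hie
      rw [hF0]
      rcases Finset.mem_insert.1 hwab with rfl | hw'
      · exact Finset.mem_insert_self _ _
      · rw [Finset.mem_singleton] at hw'
        subst hw'
        exact Finset.mem_insert_of_mem (Finset.mem_insert_self _ _)
    · have hie : i = ⟨1, h1⟩ := Fin.ext h
      subst hie
      rw [hF1]
      rcases Finset.mem_insert.1 hwab with rfl | hw'
      · exact Finset.mem_insert_self _ _
      · rw [Finset.mem_singleton] at hw'
        subst hw'
        exact Finset.mem_insert_of_mem (Finset.mem_insert_self _ _)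
  | succ k h2 ih =>
    intro hk1n w p q hp hq hpq hwp hwq i hi
    have hkn' : k < n := by omega
    obtain ⟨a, b, x, hab, hax, hbx, haU, hbU, hxU, hF⟩ := step_data hB (by omega) hkn'
    have hadj := glue_adj hB hEn (by omega) hkn' hF hab hax hbx hxU
    have hstep := degTwo_step hB.1 hkn' hF hab hax hbx haU hbU hxU hadj
    have hSk := hcard k h2 (by omega)
    have hSk1 := hcard (k+1) (by omega) hk1n
    have hxS : x ∉ degTwo F k \ {a, b} :=
      fun h => hxU (degTwo_subset_partU (Finset.mem_sdiff.1 h).1)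
    have hs1 : (degTwo F k \ {a, b}).card = 1 := by
      have heq : (degTwo F (k+1)).card = (degTwo F k \ {a, b}).card + 1 := by
        rw [hstep, Finset.card_insert_of_notMem hxS]
      omega
    obtain ⟨s, hs⟩ := Finset.card_eq_one.1 hs1
    have hsS : s ∈ degTwo F k ∧ s ∉ ({a, b} : Finset V) :=
      Finset.mem_sdiff.1 (hs ▸ Finset.mem_singleton_self s)
    obtain ⟨r1, r2, hr12, hSkeq⟩ := Finset.card_eq_two.1 hSk
    have hsmem : s = r1 ∨ s = r2 := by
      have hm := hsS.1
      rw [hSkeq] at hm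
      simpa using hm
    obtain ⟨r, hrS, hrs⟩ : ∃ r, r ∈ degTwo F k ∧ r ≠ s := by
      rcases hsmem with rfl | rfl
      · exact ⟨r2, by rw [hSkeq]; simp, fun h => hr12 h.symm⟩
      · exact ⟨r1, by rw [hSkeq]; simp, hr12⟩
    have hrab : r ∈ ({a, b} : Finset V) := by
      by_contra h
      have hm : r ∈ degTwo F k \ {a, b} := Finset.mem_sdiff.2 ⟨hrS, h⟩
      rw [hs] at hm
      exact hrs (Finset.mem_singleton.1 hm)
    have hp' : p = x ∨ p = s := by
      rw [hstep, hs] at hp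
      simpa using hp
    have hq' : q = x ∨ q = s := by
      rw [hstep, hs] at hq
      simpa using hq
    have hwadjxs : (partGraph F (k+1)).Adj w x ∧ (partGraph F (k+1)).Adj w s := by
      rcases hp' with rfl | rfl
      · rcases hq' with rfl | rfl
        · exact absurd rfl hpq
        · exact ⟨hwp, hwq⟩
      · rcases hq' with rfl | rfl
        · exact ⟨hwq, hwp⟩
        · exact absurd rfl hpq
    have hwab : w ∈ ({a, b} : Finset V) := by
      have hm := mem_nbr.2 hwadjxs.1.symm
      rwa [nbr_new hkn' hF hax hbx hxU] at hm
    have hsa : s ≠ a := fun h => hsS.2 (h ▸ Finset.mem_insert_self a {b})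
    have hsb : s ≠ b := fun h => hsS.2 (by
      rw [h]
      exact Finset.mem_insert_of_mem (Finset.mem_singleton_self b))
    have hsx : s ≠ x := fun h => hxU (h ▸ degTwo_subset_partU hsS.1)
    have hsF : s ∉ F ⟨k, hkn'⟩ := by
      rw [hF]
      simp only [Finset.mem_insert, Finset.mem_singleton]
      push_neg
      exact ⟨hsa, hsb, hsx⟩
    have hws_k : (partGraph F k).Adj w s := by
      have hm : w ∈ (partGraph F (k+1)).neighborFinset s := mem_nbr.2 hwadjxs.2.symm
      rw [nbr_untouched hkn' hsF] at hm
      exact (mem_nbr.1 hm).symm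
    have hwr : w ≠ r := by
      rintro rfl
      exact no_adj_degTwo hB hEn h2 (by omega) w s hws_k
        (mem_degTwo.1 hrS) (mem_degTwo.1 hsS.1)
    have hwadjr : (partGraph F k).Adj w r := by
      rcases Finset.mem_insert.1 hwab with rfl | hw'
      · rcases Finset.mem_insert.1 hrab with h | h
        · exact absurd h.symm hwr
        · rw [Finset.mem_singleton] at h
          rw [h]
          exact hadj
      · rw [Finset.mem_singleton] at hw'
        subst hw'
        rcases Finset.mem_insert.1 hrab with h | h
        · rw [h]
          exact hadj.symm
        · rw [Finset.mem_singleton] at h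
          exact absurd h.symm hwr
    have hIH := ih (by omega) w r s hrS hsS.1 hrs hwadjr hws_k
    rcases Nat.lt_succ_iff_lt_or_eq.1 hi with h | h
    · exact hIH i h
    · have hie : i = ⟨k, hkn'⟩ := Fin.ext h
      subst hie
      rw [hF]
      rcases Finset.mem_insert.1 hwab with rfl | hw'
      · exact Finset.mem_insert_self _ _
      · rw [Finset.mem_singleton] at hw'
        subst hw'
        exact Finset.mem_insert_of_mem (Finset.mem_insert_self _ _)

lemma partU_succ {F : Fin n → Finset V} {k : ℕ} (hkn : k < n) :
    partU F (k+1) = partU F k ∪ F ⟨k, hkn⟩ := by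
  ext t
  rw [Finset.mem_union, mem_partU, mem_partU]
  constructor
  · rintro ⟨i, hi, ht⟩
    rcases Nat.lt_succ_iff_lt_or_eq.1 hi with h | h
    · exact Or.inl ⟨i, h, ht⟩
    · exact Or.inr ((Fin.ext h : i = ⟨k, hkn⟩) ▸ ht)
  · rintro (⟨i, hi, ht⟩ | ht)
    · exact ⟨i, Nat.lt_succ_of_lt hi, ht⟩
    · exact ⟨⟨k, hkn⟩, Nat.lt_succ_self k, ht⟩

lemma path_base_core {F : Fin n → Finset V} (h0 : 0 < n) (h1 : 1 < n) {a b c x z : V}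
    (hab : a ≠ b) (hac : a ≠ c) (hbc : b ≠ c) (hax : a ≠ x) (hbx : b ≠ x) (hcx : c ≠ x)
    (hF0 : F ⟨0, h0⟩ = {a, b, c}) (hF1 : F ⟨1, h1⟩ = {a, b, x})
    (hdt : degTwo F 2 = {c, x}) (hza : z = a) :
    ∃ l : List V, l.Nodup ∧ l.toFinset = partU F 2 \ {z} ∧
      List.IsChain (partGraph F 2).Adj l ∧
      ∃ p q, l.head? = some p ∧ l.getLast? = some q ∧ degTwo F 2 = {p, q} := by
  subst hza
  have hcF0 : c ∈ F ⟨0, h0⟩ := by rw [hF0]; simp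
  have hbF0 : b ∈ F ⟨0, h0⟩ := by rw [hF0]; simp
  have hbF1 : b ∈ F ⟨1, h1⟩ := by rw [hF1]; simp
  have hxF1 : x ∈ F ⟨1, h1⟩ := by rw [hF1]; simp
  refine ⟨[c, b, x], ?_, ?_, ?_, c, x, rfl, rfl, hdt⟩
  · simp [hbc.symm, hcx, hbx]
  · have hU : partU F 2 = partU F 1 ∪ F ⟨1, h1⟩ := partU_succ h1
    rw [hU, partU_one h0, hF0, hF1]
    ext t
    simp only [List.toFinset_cons, List.toFinset_nil, insert_empty_eq, Finset.mem_insert,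
      Finset.mem_sdiff, Finset.mem_union, Finset.mem_singleton]
    constructor
    · rintro (rfl | rfl | rfl)
      · exact ⟨Or.inl (Or.inr (Or.inr rfl)), fun h => hac h.symm⟩
      · exact ⟨Or.inl (Or.inr (Or.inl rfl)), fun h => hab h.symm⟩
      · exact ⟨Or.inr (Or.inr (Or.inr rfl)), fun h => hax h.symm⟩
    · rintro ⟨(h | h | h) | (h | h | h), hnz⟩
      · exact absurd h hnz
      · exact Or.inr (Or.inl h)
      · exact Or.inl h
      · exact absurd h hnz
      · exact Or.inr (Or.inl h)
      · exact Or.inr (Or.inr h)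
  · have hcb : (partGraph F 2).Adj c b :=
      ⟨fun h => hbc h.symm, ⟨0, h0⟩, Nat.zero_lt_two, hcF0, hbF0⟩
    have hbx' : (partGraph F 2).Adj b x := ⟨hbx, ⟨1, h1⟩, Nat.one_lt_two, hbF1, hxF1⟩
    exact List.IsChain.cons_cons hcb (List.IsChain.cons_cons hbx' (List.isChain_singleton x))

lemma path_inv {F : Fin n → Finset V} (hB : IsBunch 3 F)
    (hEn : (partGraph F n).edgeFinset.card = 2 * n + 1)
    (hcard : ∀ j, 2 ≤ j → j ≤ n → (degTwo F j).card = 2)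
    {z : V} (hz : ∀ i : Fin n, z ∈ F i) {k : ℕ} (h2 : 2 ≤ k) :
    k ≤ n → ∃ l : List V, l.Nodup ∧ l.toFinset = partU F k \ {z} ∧
      List.IsChain (partGraph F k).Adj l ∧
      ∃ p q, l.head? = some p ∧ l.getLast? = some q ∧ degTwo F k = {p, q} := by
  induction k, h2 using Nat.le_induction with
  | base =>
    intro hkn
    have h0 : 0 < n := by omega
    have h1 : 1 < n := by omega
    obtain ⟨a, b, c, x, hab, hac, hbc, hax, hbx, hcx, hF0, hF1, hxU0, hdt⟩ :=
      stage_two hB h0 h1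
    have hzab : z = a ∨ z = b := by
      have hz0 := hz ⟨0, h0⟩
      have hz1 := hz ⟨1, h1⟩
      rw [hF0] at hz0
      rw [hF1] at hz1
      simp only [Finset.mem_insert, Finset.mem_singleton] at hz0 hz1
      rcases hz0 with h | h | h
      · exact Or.inl h
      · exact Or.inr h
      · subst h
        rcases hz1 with h | h | h
        · exact absurd h.symm hac
        · exact absurd h.symm hbc
        · exact absurd h hcx
    rcases hzab with h | h
    · exact path_base_core h0 h1 hab hac hbc hax hbx hcx hF0 hF1 hdt h
    · exact path_base_core h0 h1 hab.symm hbc hac hbx hax hcx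
        (by rw [hF0, Finset.insert_comm]) (by rw [hF1, Finset.insert_comm]) hdt h
  | succ k h2 ih =>
    intro hk1n
    have hkn' : k < n := by omega
    obtain ⟨l, hnd, htf, hch, p, q, hhead, hlast, hdt⟩ := ih (by omega)
    obtain ⟨a, b, x, hab, hax, hbx, haU, hbU, hxU, hF⟩ := step_data hB (by omega) hkn'
    have hadj := glue_adj hB hEn (by omega) hkn' hF hab hax hbx hxU
    have hstep := degTwo_step hB.1 hkn' hF hab hax hbx haU hbU hxU hadj
    have hSk := hcard k h2 (by omega)
    have hSk1 := hcard (k+1) (by omega) hk1n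
    have hpq : p ≠ q := by
      intro h
      rw [hdt, h] at hSk
      simp at hSk
    have hxS : x ∉ degTwo F k \ {a, b} :=
      fun h => hxU (degTwo_subset_partU (Finset.mem_sdiff.1 h).1)
    have hs1 : (degTwo F k \ {a, b}).card = 1 := by
      have heq : (degTwo F (k+1)).card = (degTwo F k \ {a, b}).card + 1 := by
        rw [hstep, Finset.card_insert_of_notMem hxS]
      omega
    obtain ⟨s, hs⟩ := Finset.card_eq_one.1 hs1
    have hsS : s ∈ degTwo F k ∧ s ∉ ({a, b} : Finset V) :=
      Finset.mem_sdiff.1 (hs ▸ Finset.mem_singleton_self s)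
    have hsmem : s = p ∨ s = q := by
      have hm := hsS.1
      rw [hdt] at hm
      simpa using hm
    have h0n : 0 < n := by omega
    have hzU : z ∈ partU F k := mem_partU.2 ⟨⟨0, h0n⟩, show (0:ℕ) < k by omega, hz _⟩
    have hxz : x ≠ z := fun h => hxU (h ▸ hzU)
    have hUsucc : partU F (k+1) \ {z} = insert x (partU F k \ {z}) := by
      rw [partU_succ hkn', hF]
      ext t
      simp only [Finset.mem_sdiff, Finset.mem_union, Finset.mem_insert, Finset.mem_singleton]
      constructor
      · rintro ⟨hm | (rfl | rfl | rfl), hnz⟩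
        · exact Or.inr ⟨hm, hnz⟩
        · exact Or.inr ⟨haU, hnz⟩
        · exact Or.inr ⟨hbU, hnz⟩
        · exact Or.inl rfl
      · rintro (rfl | ⟨hm, hnz⟩)
        · exact ⟨Or.inr (Or.inr (Or.inr rfl)), hxz⟩
        · exact ⟨Or.inl hm, hnz⟩
    have hxl : x ∉ l := by
      intro hmem
      apply hxU
      have : x ∈ l.toFinset := List.mem_toFinset.2 hmem
      rw [htf] at this
      exact (Finset.mem_sdiff.1 this).1
    have hch' : List.IsChain (partGraph F (k+1)).Adj l :=
      List.IsChain.imp (fun u v h => partGraph_mono (Nat.le_add_right k 1) h) hch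
    have hlne : l ≠ [] := by
      intro h
      rw [h] at hhead
      simp at hhead
    have hxF : x ∈ F ⟨k, hkn'⟩ := by
      rw [hF]
      simp
    have hmemF : ∀ t : V, t ∈ degTwo F k → t ∉ ({s} : Finset V) → t ∈ F ⟨k, hkn'⟩ := by
      intro t htS hts
      have htab : t ∈ ({a, b} : Finset V) := by
        by_contra h
        have hm : t ∈ degTwo F k \ {a, b} := Finset.mem_sdiff.2 ⟨htS, h⟩
        rw [hs] at hm
        exact hts hm
      rw [hF]
      rcases Finset.mem_insert.1 htab with rfl | h
      · exact Finset.mem_insert_self _ _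
      · rw [Finset.mem_singleton] at h
        subst h
        exact Finset.mem_insert_of_mem (Finset.mem_insert_self _ _)
    rcases hsmem with rfl | rfl
    · -- s = p kept; q is the removed end; extend at the tail with x
      have hqF : q ∈ F ⟨k, hkn'⟩ := by
        apply hmemF q (by rw [hdt]; simp)
        simp only [Finset.mem_singleton]
        exact fun h => hpq h.symm
      have hqU : q ∈ partU F k := degTwo_subset_partU (by rw [hdt]; simp)
      have hqx : q ≠ x := fun h => hxU (h ▸ hqU)
      refine ⟨l ++ [x], ?_, ?_, ?_, s, x, ?_, List.getLast?_concat, ?_⟩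
      · rw [List.nodup_append]
        exact ⟨hnd, List.nodup_singleton x, by simp [List.disjoint_singleton, hxl]; exact fun a ha h => hxl (h ▸ ha)⟩
      · rw [List.toFinset_append, hUsucc, htf]
        simp
      · rw [List.isChain_append]
        refine ⟨hch', List.isChain_singleton x, ?_⟩
        intro u hu y hy
        rw [hlast] at hu
        simp at hu hy
        subst hu
        subst hy
        exact ⟨hqx, ⟨k, hkn'⟩, Nat.lt_succ_self k, hqF, hxF⟩
      · rw [List.head?_append_of_ne_nil l hlne, hhead]
      · rw [hstep, hs]
        exact Finset.pair_comm x s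
    · -- s = q kept; p is the removed end; extend at the head with x
      have hpF : p ∈ F ⟨k, hkn'⟩ := by
        apply hmemF p (by rw [hdt]; simp)
        simp only [Finset.mem_singleton]
        exact hpq
      have hpU : p ∈ partU F k := degTwo_subset_partU (by rw [hdt]; simp)
      have hpx : p ≠ x := fun h => hxU (h ▸ hpU)
      refine ⟨x :: l, ?_, ?_, ?_, x, s, rfl, ?_, ?_⟩
      · exact List.nodup_cons.2 ⟨hxl, hnd⟩
      · rw [List.toFinset_cons, hUsucc, htf]
      · rw [List.isChain_cons]
        refine ⟨?_, hch'⟩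
        intro y hy
        rw [hhead] at hy
        simp at hy
        subst hy
        exact ⟨fun h => hpx h.symm, ⟨k, hkn'⟩, Nat.lt_succ_self k, hxF, hpF⟩
      · show (([x] ++ l).getLast? = some s)
        rw [List.getLast?_append_of_ne_nil [x] hlne, hlast]
      · rw [hstep, hs]

lemma edge_card_congr {G G' : SimpleGraph V} [Fintype G.edgeSet] [Fintype G'.edgeSet]
    (h : G = G') : G.edgeFinset.card = G'.edgeFinset.card := by
  have h2 : G.edgeSet = G'.edgeSet := by rw [h]
  exact congrArg Finset.card (Set.toFinset_congr h2)

lemma mod_shape {i M : ℕ} (h : i < M) :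
    (i + M - 1) % M = if i = 0 then M - 1 else i - 1 := by
  split
  · subst ‹i = 0›
    simp only [Nat.zero_add]
    exact Nat.mod_eq_of_lt (by omega)
  · have he : i + M - 1 = (i - 1) + M := by omega
    rw [he, Nat.add_mod_right]
    exact Nat.mod_eq_of_lt (by omega)

lemma succ_mod_shape {i M : ℕ} (h : i < M) :
    (i + 1) % M = if i + 1 = M then 0 else i + 1 := by
  split
  · rw [‹i + 1 = M›, Nat.mod_self]
  · exact Nat.mod_eq_of_lt (by omega)

lemma wrap_succ_mod {i M : ℕ} (h : i < M) : ((i + M - 1) % M + 1) % M = i := by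
  rw [mod_shape h]
  split
  · have : M - 1 + 1 = M := by omega
    rw [this, Nat.mod_self, ‹i = 0›]
  · have : i - 1 + 1 = i := by omega
    rw [this]
    exact Nat.mod_eq_of_lt h

lemma succ_mod_ne_wrap {i M : ℕ} (h : i < M) (h4 : 4 ≤ M) :
    (i + 1) % M ≠ (i + M - 1) % M := by
  rw [mod_shape h, succ_mod_shape h]
  split <;> split <;> omega

end BunchAux

open BunchAux

/-- A connected triangle collection `A` on `v ≥ 5` vertices with minimum degree at
least `3` and `2v-2` edges, containing a spanning `(v-2)`-bunch of its triangles with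
`2v-3` edges, is the wheel `W_{v-1}`. -/
theorem stmt19 {V : Type} [Fintype V] [DecidableEq V] (v m : ℕ) (hv : 5 ≤ v)
    (hcardV : Fintype.card V = v)
    (T : Fin m → Finset V) (hT3 : ∀ j, (T j).card = 3)
    (hspanT : Finset.univ.biUnion T = Finset.univ)
    (hconn : (auxGraph T).Connected)
    (hdeg : ∀ x : V, 3 ≤ ((cliquesGraph T).neighborFinset x).card)
    (hedges : (cliquesGraph T).edgeFinset.card = 2 * v - 2)
    (F : Fin (v - 2) → Finset V) (hB : IsBunch 3 F) (hFT : ∀ i, ∃ j, F i = T j)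
    (hspanF : Finset.univ.biUnion F = Finset.univ)
    (hBedges : (cliquesGraph F).edgeFinset.card = 2 * v - 3) :
    Nonempty (cliquesGraph T ≃g wheel (v - 1)) := by
  classical
  have hn3 : 3 ≤ v - 2 := by omega
  have hm4 : 4 ≤ v - 1 := by omega
  have hFG : ∀ u w : V, (cliquesGraph F).Adj u w ↔ (partGraph F (v-2)).Adj u w := by
    intro u w
    constructor
    · rintro ⟨hne, i, h1, h2⟩
      exact ⟨hne, i, i.isLt, h1, h2⟩
    · rintro ⟨hne, i, -, h1, h2⟩
      exact ⟨hne, i, h1, h2⟩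
  have hGeq : cliquesGraph F = partGraph F (v-2) := by
    ext u w
    exact hFG u w
  have hEn : (partGraph F (v-2)).edgeFinset.card = 2 * (v-2) + 1 := by
    rw [← edge_card_congr hGeq, hBedges]
    omega
  have hle : ∀ u w : V, (cliquesGraph F).Adj u w → (cliquesGraph T).Adj u w := by
    rintro u w ⟨hne, i, h1, h2⟩
    obtain ⟨j, hj⟩ := hFT i
    exact ⟨hne, j, hj ▸ h1, hj ▸ h2⟩
  have hsubE : (cliquesGraph F).edgeFinset ⊆ (cliquesGraph T).edgeFinset := by
    intro e
    rw [SimpleGraph.mem_edgeFinset, SimpleGraph.mem_edgeFinset]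
    induction e using Sym2.ind with
    | _ u w => exact fun h => hle u w h
  have hsd : ((cliquesGraph T).edgeFinset \ (cliquesGraph F).edgeFinset).card = 1 := by
    rw [Finset.card_sdiff_of_subset hsubE, hedges, hBedges]
    omega
  obtain ⟨e0, he0⟩ := Finset.card_eq_one.1 hsd
  obtain ⟨X, Y, hXYd⟩ : ∃ X Y : V,
      (cliquesGraph T).edgeFinset \ (cliquesGraph F).edgeFinset = {s(X, Y)} := by
    induction e0 using Sym2.ind with
    | _ u w => exact ⟨u, w, he0⟩
  have hXYmem : s(X, Y) ∈ (cliquesGraph T).edgeFinset ∧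
      s(X, Y) ∉ (cliquesGraph F).edgeFinset := by
    have hm : s(X,Y) ∈ _ \ _ := hXYd ▸ Finset.mem_singleton_self _
    exact Finset.mem_sdiff.1 hm
  have hadjXY : (cliquesGraph T).Adj X Y := by
    have hm := hXYmem.1
    rwa [SimpleGraph.mem_edgeFinset, SimpleGraph.mem_edgeSet] at hm
  have hXY : X ≠ Y := hadjXY.ne
  have hAiff : ∀ u w : V, (cliquesGraph T).Adj u w ↔
      (s(u, w) = s(X, Y) ∨ (cliquesGraph F).Adj u w) := by
    intro u w
    constructor
    · intro h
      by_cases hF' : (cliquesGraph F).Adj u w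
      · exact Or.inr hF'
      · left
        have hm : s(u,w) ∈ (cliquesGraph T).edgeFinset \ (cliquesGraph F).edgeFinset :=
          Finset.mem_sdiff.2 ⟨SimpleGraph.mem_edgeFinset.2 h,
            fun hc => hF' (SimpleGraph.mem_edgeFinset.1 hc)⟩
        rw [hXYd] at hm
        exact Finset.mem_singleton.1 hm
    · rintro (h | h)
      · rw [Sym2.eq_iff] at h
        rcases h with ⟨rfl, rfl⟩ | ⟨rfl, rfl⟩
        · exact hadjXY
        · exact hadjXY.symm
      · exact hle u w h
  have hnbrsub : ∀ w : V, w ≠ X → w ≠ Y →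
      (cliquesGraph T).neighborFinset w ⊆ (partGraph F (v-2)).neighborFinset w := by
    intro w hwX hwY u hu
    rw [SimpleGraph.mem_neighborFinset] at hu
    rcases (hAiff w u).1 hu with h | h
    · rw [Sym2.eq_iff] at h
      rcases h with ⟨rfl, rfl⟩ | ⟨rfl, rfl⟩
      · exact absurd rfl hwX
      · exact absurd rfl hwY
    · exact mem_nbr.2 ((hFG w u).1 h)
  have hS : degTwo F (v-2) ⊆ {X, Y} := by
    intro w hw
    rw [mem_degTwo] at hw
    by_contra hmem
    simp only [Finset.mem_insert, Finset.mem_singleton] at hmem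
    push_neg at hmem
    have h3 := hdeg w
    have hub := Finset.card_le_card (hnbrsub w hmem.1 hmem.2)
    have hw' : ((partGraph F (v-2)).neighborFinset w).card = 2 := hw
    omega
  have hcard2 : ∀ j, 2 ≤ j → j ≤ v - 2 → (degTwo F j).card = 2 := by
    intro j h2 hjn
    have hub : (degTwo F (v-2)).card ≤ 2 :=
      le_trans (Finset.card_le_card hS)
        (le_trans (Finset.card_insert_le _ _) (by simp))
    have hlb : (degTwo F 2).card = 2 := degTwo_card_two hB (by omega) (by omega)
    have hchain1 := degTwo_card_chain hB hEn (k := 2) (j := j) le_rfl h2 hjn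
    have hchain2 := degTwo_card_chain hB hEn (k := j) (j := v-2) h2 hjn le_rfl
    omega
  have hSn : degTwo F (v-2) = {X, Y} := by
    apply Finset.eq_of_subset_of_card_le hS
    rw [hcard2 (v-2) (by omega) le_rfl]
    exact le_trans (Finset.card_insert_le _ _) (by simp)
  obtain ⟨hne0, j0, hXj, hYj⟩ := hadjXY
  have hadjXY : (cliquesGraph T).Adj X Y := ⟨hne0, j0, hXj, hYj⟩
  have hcdz : (T j0 \ {X, Y}).card = 1 := by
    have hsub : ({X, Y} : Finset V) ⊆ T j0 := by
      intro t ht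
      rcases Finset.mem_insert.1 ht with rfl | ht
      · exact hXj
      · exact (Finset.mem_singleton.1 ht) ▸ hYj
    rw [Finset.card_sdiff_of_subset hsub, hT3 j0,
      Finset.card_insert_of_notMem (by simp [hXY]), Finset.card_singleton]
  obtain ⟨z, hz'⟩ := Finset.card_eq_one.1 hcdz
  have hzmem : z ∈ T j0 ∧ z ∉ ({X, Y} : Finset V) :=
    Finset.mem_sdiff.1 (hz' ▸ Finset.mem_singleton_self z)
  have hzX : z ≠ X := fun h => hzmem.2 (by rw [h]; simp)
  have hzY : z ≠ Y := fun h => hzmem.2 (by rw [h]; simp)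
  have hadjXz : (cliquesGraph T).Adj X z := ⟨fun h => hzX h.symm, j0, hXj, hzmem.1⟩
  have hadjYz : (cliquesGraph T).Adj Y z := ⟨fun h => hzY h.symm, j0, hYj, hzmem.1⟩
  have hGXz : (partGraph F (v-2)).Adj X z := by
    rcases (hAiff X z).1 hadjXz with h | h
    · rw [Sym2.eq_iff] at h
      rcases h with ⟨-, h2⟩ | ⟨h1, -⟩
      · exact absurd h2 hzY
      · exact absurd h1 hXY
    · exact (hFG X z).1 h
  have hGYz : (partGraph F (v-2)).Adj Y z := by
    rcases (hAiff Y z).1 hadjYz with h | h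
    · rw [Sym2.eq_iff] at h
      rcases h with ⟨h1, -⟩ | ⟨-, h2⟩
      · exact absurd h1 (fun hh => hXY hh.symm)
      · exact absurd h2 hzX
    · exact (hFG Y z).1 h
  have hzF : ∀ i : Fin (v-2), z ∈ F i := fun i =>
    common_nbr_mem hB hEn hcard2 (show 2 ≤ v - 2 by omega) le_rfl z X Y
      (by rw [hSn]; simp) (by rw [hSn]; simp) hXY hGXz.symm hGYz.symm i i.isLt
  have hzadj : ∀ w : V, w ≠ z → (cliquesGraph T).Adj z w := by
    intro w hw
    have hwu : w ∈ Finset.univ.biUnion F := by rw [hspanF]; exact Finset.mem_univ w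
    obtain ⟨i, -, hwi⟩ := Finset.mem_biUnion.1 hwu
    exact hle z w ⟨fun h => hw h.symm, i, hzF i, hwi⟩
  have hnbrz : (cliquesGraph T).neighborFinset z = Finset.univ.erase z := by
    ext u
    rw [SimpleGraph.mem_neighborFinset, Finset.mem_erase]
    constructor
    · intro h
      exact ⟨h.ne', Finset.mem_univ u⟩
    · rintro ⟨h, -⟩
      exact hzadj u h
  have hdegz : (cliquesGraph T).degree z = v - 1 := by
    rw [SimpleGraph.degree, hnbrz, Finset.card_erase_of_mem (Finset.mem_univ z),
      Finset.card_univ, hcardV]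
  have hdeg' : ∀ w : V, 3 ≤ (cliquesGraph T).degree w := hdeg
  have hdeg3 : ∀ w : V, w ≠ z → (cliquesGraph T).degree w = 3 := by
    by_contra hcon
    push_neg at hcon
    obtain ⟨w0, hw0z, hw0⟩ := hcon
    have hsum := SimpleGraph.sum_degrees_eq_twice_card_edges (cliquesGraph T)
    rw [hedges] at hsum
    have hsplit : (∑ w ∈ Finset.univ.erase z, (cliquesGraph T).degree w) +
        (cliquesGraph T).degree z = ∑ w, (cliquesGraph T).degree w :=
      Finset.sum_erase_add _ _ (Finset.mem_univ z)
    have hstrict : ∑ _w ∈ Finset.univ.erase z, (3:ℕ) <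
        ∑ w ∈ Finset.univ.erase z, (cliquesGraph T).degree w := by
      apply Finset.sum_lt_sum (fun w _ => hdeg' w)
      exact ⟨w0, Finset.mem_erase.2 ⟨hw0z, Finset.mem_univ w0⟩,
        by have := hdeg' w0; omega⟩
    rw [Finset.sum_const, Finset.card_erase_of_mem (Finset.mem_univ z),
      Finset.card_univ, hcardV, smul_eq_mul] at hstrict
    omega
  obtain ⟨l, hnd, htf, hch, p, q, hhead, hlast, hdtn⟩ :=
    path_inv hB hEn hcard2 hzF (show 2 ≤ v - 2 by omega) le_rfl
  have hUn : partU F (v-2) = Finset.univ := by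
    ext w
    simp only [Finset.mem_univ, iff_true]
    have hwu : w ∈ Finset.univ.biUnion F := by rw [hspanF]; exact Finset.mem_univ w
    obtain ⟨i, -, hwi⟩ := Finset.mem_biUnion.1 hwu
    exact mem_partU.2 ⟨i, i.isLt, hwi⟩
  have htf' : l.toFinset = Finset.univ.erase z := by
    rw [htf, hUn]
    ext u
    rw [Finset.mem_sdiff, Finset.mem_erase, Finset.mem_singleton]
    tauto
  have hzl : z ∉ l := by
    intro h
    have hm := List.mem_toFinset.2 h
    rw [htf'] at hm
    exact (Finset.mem_erase.1 hm).1 rfl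
  have hlen : l.length = v - 1 := by
    rw [← List.toFinset_card_of_nodup hnd, htf',
      Finset.card_erase_of_mem (Finset.mem_univ z), Finset.card_univ, hcardV]
  have hlne : l ≠ [] := by
    intro h
    rw [h] at hhead
    simp at hhead
  have h0len : 0 < l.length := by omega
  have hp_get : l.get ⟨0, h0len⟩ = p := by
    have h1 := List.head?_eq_head hlne
    rw [hhead] at h1
    have h2 : p = l.head hlne := by injection h1
    rw [List.get_eq_getElem, ← List.head_eq_getElem hlne]
    exact h2.symm
  have hq_get : l.get ⟨l.length - 1, by omega⟩ = q := by
    have h1 := List.getLast?_eq_getLast hlne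
    rw [hlast] at h1
    have h2 : q = l.getLast hlne := by injection h1
    rw [List.get_eq_getElem, ← List.getLast_eq_getElem hlne]
    exact h2.symm
  have hpq_eq : ({p, q} : Finset V) = {X, Y} := by
    rw [← hdtn]
    exact hSn
  have hpq : p ≠ q := by
    have hc := hcard2 (v-2) (by omega) le_rfl
    rw [hdtn] at hc
    intro h
    rw [h] at hc
    simp at hc
  have hadjpq : (cliquesGraph T).Adj p q := by
    have hpmem : p = X ∨ p = Y := by
      have hm : p ∈ ({X, Y} : Finset V) := hpq_eq ▸ Finset.mem_insert_self p {q}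
      simpa using hm
    have hqmem : q = X ∨ q = Y := by
      have hm : q ∈ ({X, Y} : Finset V) :=
        hpq_eq ▸ Finset.mem_insert_of_mem (Finset.mem_singleton_self q)
      simpa using hm
    rcases hpmem with rfl | rfl
    · rcases hqmem with rfl | rfl
      · exact absurd rfl hpq
      · exact hadjXY
    · rcases hqmem with rfl | rfl
      · exact hadjXY.symm
      · exact absurd rfl hpq
  have hchA : List.IsChain (cliquesGraph T).Adj l :=
    List.IsChain.imp (fun u w h => hle u w ((hFG u w).2 h)) hch
  set g : Fin (v-1) → V := fun i => l.get ⟨i.val, by rw [hlen]; exact i.isLt⟩ with hgdef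
  have hgval : ∀ (i : Fin (v-1)) (h : i.val < l.length), g i = l.get ⟨i.val, h⟩ := by
    intro i h
    rw [hgdef]
  have ginj : ∀ i j : Fin (v-1), g i = g j → i = j := by
    intro i j h
    rw [hgval i (by omega), hgval j (by omega)] at h
    have hv' := (hnd.get_inj_iff).1 h
    have hvv : i.val = j.val := congrArg (@Fin.val l.length) hv'
    exact Fin.ext hvv
  have gz : ∀ i : Fin (v-1), g i ≠ z := by
    intro i h
    apply hzl
    rw [← h, hgval i (by omega)]
    exact List.get_mem l _
  have hconsec : ∀ i j : Fin (v-1), (i.val + 1) % (v-1) = j.val →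
      (cliquesGraph T).Adj (g i) (g j) := by
    intro i j hij
    have hiv := i.isLt
    by_cases hlt : i.val + 1 < v - 1
    · have hjval : j.val = i.val + 1 := by rw [← hij, Nat.mod_eq_of_lt hlt]
      have egj : g j = l.get ⟨i.val + 1, by omega⟩ :=
        (hgval j (by omega)).trans (congrArg l.get (Fin.ext hjval))
      rw [hgval i (by omega), egj]
      exact List.isChain_iff_getElem.1 hchA i.val (by omega)
    · have hiv1 : i.val + 1 = v - 1 := by omega
      have hjval : j.val = 0 := by
        rw [← hij, hiv1, Nat.mod_self]
      have egi : g i = q := by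
        rw [hgval i (by omega)]
        have he : (⟨i.val, by omega⟩ : Fin l.length) = ⟨l.length - 1, by omega⟩ :=
          Fin.ext (show i.val = l.length - 1 by omega)
        rw [he]
        exact hq_get
      have egj : g j = p := by
        rw [hgval j (by omega)]
        have he : (⟨j.val, by omega⟩ : Fin l.length) = ⟨0, h0len⟩ := Fin.ext hjval
        rw [he]
        exact hp_get
      rw [egi, egj]
      exact hadjpq.symm
  have hmain : ∀ o1 o2 : Option (Fin (v-1)),
      (cliquesGraph T).Adj (Option.elim o1 z g) (Option.elim o2 z g) ↔
        (wheel (v-1)).Adj o1 o2 := by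
    intro o1 o2
    rcases o1 with _ | i <;> rcases o2 with _ | j
    · constructor
      · intro h
        exact absurd rfl h.ne
      · rintro ⟨hne, -⟩
        exact absurd rfl hne
    · constructor
      · intro _
        exact ⟨by simp, Or.inl rfl⟩
      · intro _
        exact hzadj (g j) (gz j)
    · constructor
      · intro _
        exact ⟨by simp, Or.inr (Or.inl rfl)⟩
      · intro _
        exact (hzadj (g i) (gz i)).symm
    · constructor
      · intro hA
        have hij : i ≠ j := by
          intro h
          rw [h] at hA
          exact absurd rfl hA.ne
        have hm0 : 0 < v - 1 := by omega
        set i1 : Fin (v-1) := ⟨(i.val + 1) % (v-1), Nat.mod_lt _ hm0⟩ with hi1def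
        set i2 : Fin (v-1) := ⟨(i.val + (v-1) - 1) % (v-1), Nat.mod_lt _ hm0⟩ with hi2def
        have hadj1 : (cliquesGraph T).Adj (g i) (g i1) := hconsec i i1 rfl
        have hadj2 : (cliquesGraph T).Adj (g i2) (g i) :=
          hconsec i2 i (wrap_succ_mod i.isLt)
        have hne12 : i1 ≠ i2 := by
          intro h
          exact succ_mod_ne_wrap i.isLt hm4 (congrArg Fin.val h)
        have hSsub : ({z, g i1, g i2} : Finset V) ⊆
            (cliquesGraph T).neighborFinset (g i) := by
          intro t ht
          rw [SimpleGraph.mem_neighborFinset]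
          rcases Finset.mem_insert.1 ht with rfl | ht
          · exact (hzadj (g i) (gz i)).symm
          rcases Finset.mem_insert.1 ht with rfl | ht
          · exact hadj1
          · rw [Finset.mem_singleton] at ht
            subst ht
            exact hadj2.symm
        have hScard : ({z, g i1, g i2} : Finset V).card = 3 := by
          rw [Finset.card_insert_of_notMem, Finset.card_insert_of_notMem,
            Finset.card_singleton]
          · rw [Finset.mem_singleton]
            intro h
            exact hne12 (ginj _ _ h)
          · intro h
            rcases Finset.mem_insert.1 h with h | h
            · exact gz i1 h.symm
            · exact gz i2 (Finset.mem_singleton.1 h).symm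
        have hdcard : ((cliquesGraph T).neighborFinset (g i)).card = 3 :=
          hdeg3 (g i) (gz i)
        have hSeq : ({z, g i1, g i2} : Finset V) =
            (cliquesGraph T).neighborFinset (g i) :=
          Finset.eq_of_subset_of_card_le hSsub (by omega)
        have hjmem : g j ∈ ({z, g i1, g i2} : Finset V) := by
          rw [hSeq, SimpleGraph.mem_neighborFinset]
          exact hA
        have hnegoal : (some i : Option (Fin (v-1))) ≠ some j := by
          intro h
          exact hij (Option.some.inj h)
        rcases Finset.mem_insert.1 hjmem with h | h
        · exact absurd h.symm (gz j).symm
        rcases Finset.mem_insert.1 h with h | h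
        · have hj1 : j = i1 := ginj _ _ h
          refine ⟨hnegoal, Or.inr (Or.inr ⟨i, j, rfl, rfl, Or.inl ?_⟩)⟩
          rw [hj1]
        · have hj2 : j = i2 := ginj _ _ (Finset.mem_singleton.1 h)
          refine ⟨hnegoal, Or.inr (Or.inr ⟨i, j, rfl, rfl, Or.inr ?_⟩)⟩
          rw [hj2]
          exact wrap_succ_mod i.isLt
      · rintro ⟨hne, hc⟩
        rcases hc with h | h | ⟨i', j', hi', hj', hcons⟩
        · exact absurd h (by simp)
        · exact absurd h (by simp)
        · have hii : i' = i := (Option.some.inj hi').symm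
          have hjj : j' = j := (Option.some.inj hj').symm
          rw [hii, hjj] at hcons
          rcases hcons with h | h
          · exact hconsec i j h
          · exact (hconsec j i h).symm
  have hinj : Function.Injective (fun o : Option (Fin (v-1)) => Option.elim o z g) := by
    intro o1 o2 h
    simp only at h
    match o1, o2 with
    | none, none => rfl
    | none, some j => exact absurd h.symm (gz j)
    | some i, none => exact absurd h (gz i)
    | some i, some j => exact congrArg some (ginj i j h)
  have hcardeq : Fintype.card (Option (Fin (v-1))) = Fintype.card V := by
    rw [Fintype.card_option, Fintype.card_fin, hcardV]
    omega
  have hbij := (Fintype.bijective_iff_injective_and_card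
    (fun o : Option (Fin (v-1)) => Option.elim o z g)).2 ⟨hinj, hcardeq⟩
  set f := Equiv.ofBijective _ hbij with hfdef
  refine ⟨⟨f.symm, ?_⟩⟩
  intro a b
  have hkey := hmain (f.symm a) (f.symm b)
  have ha : Option.elim (f.symm a) z g = a := f.apply_symm_apply a
  have hb : Option.elim (f.symm b) z g = b := f.apply_symm_apply b
  rw [ha, hb] at hkey
  exact hkey.symm
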